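/- In a split graph G with degree sequence d = (d_1, ..., d_n) in nonincreasing order and m = m(d) = max{i : d_i ≥ i−1}, the set of m vertices of largest degree forms a clique and the remaining vertices form an independent set. -/

import Mathlib

open SimpleGraph Finset

/-- `s` is an independent set in `G`. -/
def IsIndepSet {α : Type*} (G : SimpleGraph α) (s : Set α) : Prop :=
  s.Pairwise fun a b => ¬ G.Adj a b

/-- `(G, A, B)` is a splitted graph: `A` an independent set and `B` a clique
partitioning the vertex set of `G`. -/
def IsSplitted {α : Type*} (G : SimpleGraph α) (A B : Set α) : Prop :=
  _root_.IsIndepSet G A ∧ G.IsClique B ∧ A ∪ B = Set.univ ∧ Disjoint A B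

/-- `G` is a split graph. -/
def IsSplitGraph {α : Type*} (G : SimpleGraph α) : Prop :=
  ∃ A B : Set α, IsSplitted G A B

/-- Tyshkevich composition `(G, A, B) ∘ H`: the disjoint union of `G` and `H`
together with all edges between the clique `B` and the vertices of `H`. -/
def comp {α β : Type*} (G : SimpleGraph α) (B : Set α) (H : SimpleGraph β) :
    SimpleGraph (α ⊕ β) where
  Adj x y :=
    match x, y with
    | Sum.inl a, Sum.inl a' => G.Adj a a'
    | Sum.inr b, Sum.inr b' => H.Adj b b'
    | Sum.inl a, Sum.inr _ => a ∈ B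
    | Sum.inr _, Sum.inl a => a ∈ B
  symm := ⟨by
    rintro (a | b) (a' | b') h
    · exact G.adj_symm h
    · exact h
    · exact h
    · exact H.adj_symm h⟩
  loopless := ⟨by
    rintro (a | b) h
    · exact G.ne_of_adj h rfl
    · exact H.ne_of_adj h rfl⟩

/-- The degree of a vertex, as the cardinality of its neighborhood. -/
noncomputable def deg {α : Type*} (G : SimpleGraph α) (v : α) : ℕ :=
  (G.neighborSet v).ncard

/-- The disjoint union of two edges. -/
def twoK2 : SimpleGraph (Fin 4) :=
  SimpleGraph.fromRel fun a b => (a.val = 0 ∧ b.val = 1) ∨ (a.val = 2 ∧ b.val = 3)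

/-- The 4-cycle. -/
def cycle4 : SimpleGraph (Fin 4) :=
  SimpleGraph.fromRel fun a b =>
    (a.val = 0 ∧ b.val = 1) ∨ (a.val = 1 ∧ b.val = 2) ∨
    (a.val = 2 ∧ b.val = 3) ∨ (a.val = 3 ∧ b.val = 0)

/-- The path on four vertices. -/
def path4 : SimpleGraph (Fin 4) :=
  SimpleGraph.fromRel fun a b =>
    (a.val = 0 ∧ b.val = 1) ∨ (a.val = 1 ∧ b.val = 2) ∨ (a.val = 2 ∧ b.val = 3)

/-- The 5-cycle. -/
def cycle5 : SimpleGraph (Fin 5) :=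
  SimpleGraph.fromRel fun a b =>
    (a.val = 0 ∧ b.val = 1) ∨ (a.val = 1 ∧ b.val = 2) ∨
    (a.val = 2 ∧ b.val = 3) ∨ (a.val = 3 ∧ b.val = 4) ∨ (a.val = 4 ∧ b.val = 0)

private lemma maxsplit {V : Type*} [Fintype V] {G : SimpleGraph V} (h : IsSplitGraph G) :
    ∃ A B : Set V, IsSplitted G A B ∧
      ∀ A' B' : Set V, IsSplitted G A' B' → B'.ncard ≤ B.ncard := by
  obtain ⟨A, B, hAB⟩ := h
  set S : Set ℕ := {k | ∃ A' B' : Set V, IsSplitted G A' B' ∧ B'.ncard = k} with hS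
  have hne : S.Nonempty := ⟨B.ncard, A, B, hAB, rfl⟩
  have hbdd : BddAbove S := by
    refine ⟨Fintype.card V, ?_⟩
    rintro k ⟨A', B', _, rfl⟩
    have := Set.ncard_le_ncard (Set.subset_univ B') Set.finite_univ
    simpa [Set.ncard_univ, Nat.card_eq_fintype_card] using this
  obtain ⟨A', B', hs, hcard⟩ := Nat.sSup_mem hne hbdd
  refine ⟨A', B', hs, fun A'' B'' h'' => ?_⟩
  rw [hcard]
  exact le_csSup hbdd ⟨A'', B'', h'', rfl⟩
/-- Hammer–Simeone: in a split graph with nonincreasing degree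
sequence `d` and `m = m(d) = max{i : d_i ≥ i−1}`, the `m` vertices of largest
degree form a clique and the remaining vertices form an independent set. -/
theorem stmt8 {V : Type*} [Fintype V] (G : SimpleGraph V) (hsplit : IsSplitGraph G)
    (n : ℕ) (d : Fin n → ℕ) (hanti : Antitone d) (v : Fin n ≃ V)
    (hdeg : ∀ i, deg G (v i) = d i) :
    G.IsClique {x : V | ∃ i : Fin n,
        (i : ℕ) <
          (Finset.univ.filter (fun j : Fin n => (j : ℕ) ≤ d j)).sup
            (fun j : Fin n => (j : ℕ) + 1) ∧ x = v i} ∧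
      _root_.IsIndepSet G {x : V | ∃ i : Fin n,
        (Finset.univ.filter (fun j : Fin n => (j : ℕ) ≤ d j)).sup
            (fun j : Fin n => (j : ℕ) + 1) ≤ (i : ℕ) ∧ x = v i} := by

  classical
  set M := (Finset.univ.filter (fun j : Fin n => (j : ℕ) ≤ d j)).sup
      (fun j : Fin n => (j : ℕ) + 1) with hMdef
  rcases Nat.eq_zero_or_pos n with hn | hn
  · subst hn
    constructor
    · rintro x ⟨i, -, -⟩
      exact i.elim0
    · rintro x ⟨i, -, -⟩
      exact i.elim0
  obtain ⟨A, B, ⟨hA, hB, hunion, hdisj⟩, hmax⟩ := maxsplit hsplit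
  have hBfin : B.Finite := B.toFinite
  set k := B.ncard with hk
  have hmem : ∀ x : V, x ∈ A ∨ x ∈ B := by
    intro x
    have : x ∈ A ∪ B := hunion ▸ Set.mem_univ x
    exact this
  have hcV : Fintype.card V = n := by
    rw [← Fintype.card_fin n]; exact Fintype.card_congr v.symm
  have hkn : k ≤ n := by
    have := Set.ncard_le_ncard (Set.subset_univ B) Set.finite_univ
    simpa [Set.ncard_univ, Nat.card_eq_fintype_card, hcV] using this
  -- B is nonempty
  have hBne : B.Nonempty := by
    by_contra h
    rw [Set.not_nonempty_iff_eq_empty] at h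
    have hAu : A = Set.univ := by
      rw [← hunion, h, Set.union_empty]
    have hnoedge : ∀ x y : V, ¬ G.Adj x y := by
      intro x y hxy
      exact hA (hAu ▸ Set.mem_univ x) (hAu ▸ Set.mem_univ y) hxy.ne hxy
    set x := v ⟨0, hn⟩
    have hsp : IsSplitted G ({x}ᶜ) {x} := by
      refine ⟨fun a _ b _ _ hab => hnoedge a b hab, ?_, Set.compl_union_self _, disjoint_compl_left⟩
      intro a ha b hb hab
      rw [Set.mem_singleton_iff] at ha hb
      exact absurd (ha.trans hb.symm) hab
    have h1 := hmax _ _ hsp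
    have hk0 : k = 0 := by rw [hk, h, Set.ncard_empty]
    rw [Set.ncard_singleton, hk0] at h1
    omega
  have hk1 : 1 ≤ k := by
    rw [hk]
    exact (Set.ncard_pos hBfin).mpr hBne
  -- neighbors of A-vertices lie in B
  have hNA : ∀ a ∈ A, G.neighborSet a ⊆ B := by
    intro a ha y hy
    rcases hmem y with hyA | hyB
    · exact absurd hy (hA ha hyA (G.ne_of_adj hy))
    · exact hyB
  -- every A-vertex misses some B-vertex (maximality)
  have hmiss : ∀ a ∈ A, ∃ b ∈ B, ¬ G.Adj a b := by
    intro a ha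
    by_contra h
    push_neg at h
    have haB : a ∉ B := Set.disjoint_left.mp hdisj ha
    have hsp : IsSplitted G (A \ {a}) (insert a B) := by
      refine ⟨hA.mono Set.diff_subset, ?_, ?_, ?_⟩
      · intro x hx y hy hxy
        rcases Set.mem_insert_iff.mp hx with rfl | hxB
        · rcases Set.mem_insert_iff.mp hy with rfl | hyB
          · exact absurd rfl hxy
          · exact h y hyB
        · rcases Set.mem_insert_iff.mp hy with rfl | hyB
          · exact (h x hxB).symm
          · exact hB hxB hyB hxy
      · ext z
        simp only [Set.mem_union, Set.mem_diff, Set.mem_singleton_iff,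
          Set.mem_insert_iff, Set.mem_univ, iff_true]
        rcases hmem z with hz | hz
        · by_cases hza : z = a
          · exact Or.inr (Or.inl hza)
          · exact Or.inl ⟨hz, hza⟩
        · exact Or.inr (Or.inr hz)
      · rw [Set.disjoint_left]
        rintro z ⟨hzA, hza⟩ hz
        rcases Set.mem_insert_iff.mp hz with rfl | hzB
        · exact hza rfl
        · exact Set.disjoint_left.mp hdisj hzA hzB
    have hle := hmax _ _ hsp
    rw [Set.ncard_insert_of_notMem haB hBfin, ← hk] at hle
    omega
  -- degree bounds
  have hdegB : ∀ b ∈ B, k ≤ deg G b + 1 := by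
    intro b hb
    have hsub : B \ {b} ⊆ G.neighborSet b := by
      rintro y ⟨hyB, hyb⟩
      refine hB hb hyB ?_
      rintro rfl
      exact hyb rfl
    calc k = (B \ {b}).ncard + 1 := (Set.ncard_diff_singleton_add_one hb hBfin).symm
      _ ≤ deg G b + 1 := by
          exact Nat.add_le_add_right
            (Set.ncard_le_ncard hsub (G.neighborSet b).toFinite) 1
  have hdegA : ∀ a ∈ A, deg G a < k := by
    intro a ha
    obtain ⟨b, hbB, hbn⟩ := hmiss a ha
    have hss : G.neighborSet a ⊂ B := by
      refine ⟨hNA a ha, fun hsub => hbn (hsub hbB)⟩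
    exact Set.ncard_lt_ncard hss hBfin
  -- index counting lemmas
  have hd1 : ∀ i : Fin n, (i : ℕ) < k → k ≤ d i + 1 := by
    intro i hi
    set T : Finset (Fin n) := hBfin.toFinset.image v.symm with hT
    have hTcard : T.card = k := by
      rw [hT, Finset.card_image_of_injective _ v.symm.injective,
        ← Set.ncard_eq_toFinset_card B hBfin]
    have hTne : T.Nonempty := by
      rw [← Finset.card_pos, hTcard]; omega
    set j := T.max' hTne with hj
    obtain ⟨b, hbB, hbj⟩ := Finset.mem_image.mp (T.max'_mem hTne)
    rw [Set.Finite.mem_toFinset] at hbB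
    have hjbig : k ≤ (j : ℕ) + 1 := by
      have himg : T.image Fin.val ⊆ Finset.range ((j : ℕ) + 1) := by
        intro t ht
        obtain ⟨s, hs, rfl⟩ := Finset.mem_image.mp ht
        exact Finset.mem_range.mpr (Nat.lt_succ_of_le (T.le_max' s hs))
      have := Finset.card_le_card himg
      rwa [Finset.card_image_of_injective _ Fin.val_injective, hTcard,
        Finset.card_range] at this
    have hij : i ≤ j := by
      rw [Fin.le_def]; omega
    have hdj : d j = deg G b := by
      rw [← hdeg j]
      congr 1
      rw [hj, ← hbj, Equiv.apply_symm_apply]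
    have := hanti hij
    have := hdegB b hbB
    omega
  have hd2 : ∀ i : Fin n, k ≤ (i : ℕ) → d i < k := by
    intro i hi
    by_contra h
    push_neg at h
    set T : Finset (Fin n) := Finset.univ.filter (fun j => k ≤ d j) with hT
    have hTB : T.image v ⊆ hBfin.toFinset := by
      intro x hx
      obtain ⟨s, hs, rfl⟩ := Finset.mem_image.mp hx
      rw [Finset.mem_filter] at hs
      rw [Set.Finite.mem_toFinset]
      rcases hmem (v s) with hvA | hvB
      · have := hdegA _ hvA
        rw [hdeg s] at this
        omega
      · exact hvB
    have hTcard : T.card ≤ k := by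
      have := Finset.card_le_card hTB
      rwa [Finset.card_image_of_injective _ v.injective,
        ← Set.ncard_eq_toFinset_card B hBfin] at this
    have hlow : Finset.range ((i : ℕ) + 1) ⊆ T.image Fin.val := by
      intro t ht
      rw [Finset.mem_range] at ht
      have htn : t < n := by have := i.2; omega
      refine Finset.mem_image.mpr ⟨⟨t, htn⟩, ?_, rfl⟩
      rw [Finset.mem_filter]
      refine ⟨Finset.mem_univ _, le_trans h (hanti ?_)⟩
      rw [Fin.le_def]
      simp only [Fin.val_mk]
      omega
    have := Finset.card_le_card hlow
    rw [Finset.card_image_of_injective _ Fin.val_injective, Finset.card_range] at this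
    omega
  -- M = k
  have hMk : M = k := by
    apply le_antisymm
    · apply Finset.sup_le
      intro j hj
      rw [Finset.mem_filter] at hj
      by_contra hc
      push_neg at hc
      have := hd2 j (by omega)
      omega
    · have hkn' : k - 1 < n := by omega
      have hmemf : (⟨k - 1, hkn'⟩ : Fin n) ∈
          Finset.univ.filter (fun j : Fin n => (j : ℕ) ≤ d j) := by
        rw [Finset.mem_filter]
        refine ⟨Finset.mem_univ _, ?_⟩
        have := hd1 ⟨k - 1, hkn'⟩ (by simp; omega)
        simp at this ⊢
        omega
      have := Finset.le_sup (f := fun j : Fin n => (j : ℕ) + 1) hmemf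
      rw [← hMdef] at this
      simp at this
      omega
  rw [hMk]
  -- structural lemmas
  have L1 : ∀ i : Fin n, (i : ℕ) < k → v i ∈ A →
      ∃ w ∈ B, G.neighborSet (v i) = B \ {w} := by
    intro i hi hvA
    obtain ⟨w, hwB, hw⟩ := hmiss _ hvA
    refine ⟨w, hwB, ?_⟩
    have hsub : G.neighborSet (v i) ⊆ B \ {w} := by
      intro y hy
      refine ⟨hNA _ hvA hy, ?_⟩
      rw [Set.mem_singleton_iff]
      rintro rfl
      exact hw hy
    refine Set.eq_of_subset_of_ncard_le hsub ?_ (hBfin.diff)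
    have h1 : (B \ {w}).ncard + 1 = k := Set.ncard_diff_singleton_add_one hwB hBfin
    have h2 : k ≤ deg G (v i) + 1 := by
      have := hd1 i hi
      rw [← hdeg i] at this
      exact this
    have : deg G (v i) = (G.neighborSet (v i)).ncard := rfl
    omega
  have L3 : ∀ z ∈ B, k ≤ ((v.symm z : Fin n) : ℕ) → G.neighborSet z = B \ {z} := by
    intro z hz hzk
    have hdz : deg G z < k := by
      have : deg G z = d (v.symm z) := by
        rw [← hdeg (v.symm z), Equiv.apply_symm_apply]
      rw [this]
      exact hd2 _ hzk
    have hsub : B \ {z} ⊆ G.neighborSet z := by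
      rintro y ⟨hyB, hyz⟩
      refine hB hz hyB ?_
      rintro rfl
      exact hyz rfl
    refine (Set.eq_of_subset_of_ncard_le hsub ?_ ((G.neighborSet z).toFinite)).symm
    have h1 : (B \ {z}).ncard + 1 = k := Set.ncard_diff_singleton_add_one hz hBfin
    have : (G.neighborSet z).ncard = deg G z := rfl
    omega
  -- counting sets
  set S1 : Finset V := Finset.univ.filter
    (fun x => x ∈ A ∧ ((v.symm x : Fin n) : ℕ) < k) with hS1
  set S2 : Finset V := Finset.univ.filter
    (fun x => x ∈ B ∧ k ≤ ((v.symm x : Fin n) : ℕ)) with hS2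
  set C : Finset V := Finset.univ.filter
    (fun x => x ∈ B ∧ ((v.symm x : Fin n) : ℕ) < k) with hC
  have hFfcard : (Finset.univ.filter (fun x : V => ((v.symm x : Fin n) : ℕ) < k)).card
      = k := by
    set Ff := Finset.univ.filter (fun x : V => ((v.symm x : Fin n) : ℕ) < k) with hFf
    have h1 : Ff = Finset.image v (Finset.univ.filter (fun i : Fin n => (i : ℕ) < k)) := by
      ext x
      simp only [hFf, Finset.mem_filter, Finset.mem_univ, true_and, Finset.mem_image]
      constructor
      · intro hx
        exact ⟨v.symm x, by simpa using hx, by simp⟩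
      · rintro ⟨i, hi, rfl⟩
        simpa using hi
    rw [h1, Finset.card_image_of_injective _ v.injective]
    have h2 : (Finset.univ.filter (fun i : Fin n => (i : ℕ) < k)).image Fin.val
        = Finset.range k := by
      ext t
      simp only [Finset.mem_image, Finset.mem_filter, Finset.mem_univ, true_and,
        Finset.mem_range]
      constructor
      · rintro ⟨i, hi, rfl⟩; exact hi
      · intro ht
        exact ⟨⟨t, lt_of_lt_of_le ht hkn⟩, ht, rfl⟩
    have := congrArg Finset.card h2
    rwa [Finset.card_image_of_injective _ Fin.val_injective, Finset.card_range] at this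
  have hBcard : (Finset.univ.filter (fun x : V => x ∈ B)).card = k := by
    have h1 : Finset.univ.filter (fun x : V => x ∈ B) = hBfin.toFinset := by
      ext x; simp [Set.Finite.mem_toFinset]
    rw [h1, ← Set.ncard_eq_toFinset_card B hBfin]
  have hsum1 : S1.card + C.card = k := by
    rw [← hFfcard]
    have hdisj' : Disjoint S1 C := by
      rw [Finset.disjoint_left]
      intro x hx hxC
      rw [hS1, Finset.mem_filter] at hx
      rw [hC, Finset.mem_filter] at hxC
      exact Set.disjoint_left.mp hdisj hx.2.1 hxC.2.1
    rw [← Finset.card_union_of_disjoint hdisj']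
    congr 1
    ext x
    simp only [hS1, hC, Finset.mem_union, Finset.mem_filter, Finset.mem_univ, true_and]
    constructor
    · rintro (⟨-, h⟩ | ⟨-, h⟩) <;> exact h
    · intro hx
      rcases hmem x with hxA | hxB
      · exact Or.inl ⟨hxA, hx⟩
      · exact Or.inr ⟨hxB, hx⟩
  have hsum2 : S2.card + C.card = k := by
    rw [← hBcard]
    have hdisj' : Disjoint S2 C := by
      rw [Finset.disjoint_left]
      intro x hx hxC
      rw [hS2, Finset.mem_filter] at hx
      rw [hC, Finset.mem_filter] at hxC
      omega
    rw [← Finset.card_union_of_disjoint hdisj']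
    congr 1
    ext x
    simp only [hS2, hC, Finset.mem_union, Finset.mem_filter, Finset.mem_univ, true_and]
    constructor
    · rintro (⟨h, -⟩ | ⟨h, -⟩) <;> exact h
    · intro hx
      by_cases hlt : ((v.symm x : Fin n) : ℕ) < k
      · exact Or.inr ⟨hx, hlt⟩
      · exact Or.inl ⟨hx, by omega⟩
  have hcards : S1.card = S2.card := by omega
  -- key clique step
  have key1 : ∀ i j : Fin n, (i : ℕ) < k → (j : ℕ) < k → v i ∈ A → v i ≠ v j →
      G.Adj (v i) (v j) := by
    intro i j hi hj hvA hne
    obtain ⟨w, hwB, hNw⟩ := L1 i hi hvA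
    have hS1i : v i ∈ S1 := by
      rw [hS1, Finset.mem_filter]
      exact ⟨Finset.mem_univ _, hvA, by simpa using hi⟩
    have hnoadj : ∀ z ∈ S2, z = w := by
      intro z hz
      rw [hS2, Finset.mem_filter] at hz
      have hNz := L3 z hz.2.1 hz.2.2
      by_contra hzw
      have hadj : G.Adj (v i) z := by
        have : z ∈ G.neighborSet (v i) := by
          rw [hNw]; exact ⟨hz.2.1, hzw⟩
        exact this
      have : v i ∈ G.neighborSet z := hadj.symm
      rw [hNz] at this
      exact Set.disjoint_left.mp hdisj hvA this.1
    rcases hmem (v j) with hjA | hjB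
    · -- both in A: contradiction
      exfalso
      have hS1j : v j ∈ S1 := by
        rw [hS1, Finset.mem_filter]
        exact ⟨Finset.mem_univ _, hjA, by simpa using hj⟩
      have h2 : 1 < S1.card := Finset.one_lt_card.mpr ⟨_, hS1i, _, hS1j, hne⟩
      have h2' : 1 < S2.card := hcards ▸ h2
      obtain ⟨z1, hz1, z2, hz2, hz12⟩ := Finset.one_lt_card.mp h2'
      exact hz12 ((hnoadj z1 hz1).trans (hnoadj z2 hz2).symm)
    · by_cases hjw : v j = w
      · exfalso
        have h1 : 0 < S1.card := Finset.card_pos.mpr ⟨_, hS1i⟩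
        have h1' : 0 < S2.card := hcards ▸ h1
        obtain ⟨z, hz⟩ := Finset.card_pos.mp h1'
        have hzw := hnoadj z hz
        rw [hS2, Finset.mem_filter] at hz
        have : ((v.symm w : Fin n) : ℕ) < k := by
          rw [← hjw]; simpa using hj
        rw [hzw] at hz
        omega
      · have : v j ∈ G.neighborSet (v i) := by
          rw [hNw]; exact ⟨hjB, hjw⟩
        exact this
  -- key independent step
  have key2 : ∀ i j : Fin n, k ≤ (i : ℕ) → k ≤ (j : ℕ) → v i ∈ B → v i ≠ v j →
      ¬ G.Adj (v i) (v j) := by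
    intro i j hi hj hvB hne hadj
    have hNi := L3 (v i) hvB (by simpa using hi)
    have hjB : v j ∈ B := by
      have : v j ∈ G.neighborSet (v i) := hadj
      rw [hNi] at this
      exact this.1
    have hNj := L3 (v j) hjB (by simpa using hj)
    have h2 : 1 < S2.card := by
      refine Finset.one_lt_card.mpr ⟨v i, ?_, v j, ?_, hne⟩
      · rw [hS2, Finset.mem_filter]
        exact ⟨Finset.mem_univ _, hvB, by simpa using hi⟩
      · rw [hS2, Finset.mem_filter]
        exact ⟨Finset.mem_univ _, hjB, by simpa using hj⟩
    have h1 : 0 < S1.card := by omega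
    obtain ⟨a, ha⟩ := Finset.card_pos.mp h1
    rw [hS1, Finset.mem_filter] at ha
    obtain ⟨-, haA, hak⟩ := ha
    obtain ⟨w, hwB, hNa⟩ := L1 (v.symm a) hak (by rwa [Equiv.apply_symm_apply])
    rw [Equiv.apply_symm_apply] at hNa
    have haB : a ∉ B := Set.disjoint_left.mp hdisj haA
    have hforce : ∀ z : V, z ∈ B → G.neighborSet z = B \ {z} → z = w := by
      intro z hzB hNz
      have hnadj : ¬ G.Adj a z := by
        intro h
        have : z ∈ G.neighborSet a := h
        rw [hNa] at this
        have : a ∈ G.neighborSet z := h.symm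
        rw [hNz] at this
        exact haB this.1
      by_contra hzw
      exact hnadj (by
        have : z ∈ G.neighborSet a := by
          rw [hNa]; exact ⟨hzB, hzw⟩
        exact this)
    exact hne ((hforce (v i) hvB hNi).trans (hforce (v j) hjB hNj).symm)
  constructor
  · rintro x ⟨i, hi, rfl⟩ y ⟨j, hj, rfl⟩ hne
    rcases hmem (v i) with hiA | hiB
    · exact key1 i j hi hj hiA hne
    · rcases hmem (v j) with hjA | hjB
      · exact (key1 j i hj hi hjA (Ne.symm hne)).symm
      · exact hB hiB hjB hne
  · rintro x ⟨i, hi, rfl⟩ y ⟨j, hj, rfl⟩ hne hadj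
    rcases hmem (v i) with hiA | hiB
    · rcases hmem (v j) with hjA | hjB
      · exact hA hiA hjA hne hadj
      · exact key2 j i hj hi hjB (Ne.symm hne) hadj.symm
    · exact key2 i j hi hj hiB hne hadj
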